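/- Let E be a real normed vector space, let H, I : E → ℝ be Fréchet differentiable, let U ⊆ ℝ be an open interval, and let φ : ℝ → E be differentiable on U with DH(φ(c)) = c • DI(φ(c)) for all c ∈ U. Define m(c) := H(φ(c)) − c·I(φ(c)). If the function c ↦ I(φ(c)) is differentiable at a point c ∈ U, then m is twice differentiable at c and m″(c) = −(d/dc) I(φ(c)). In particular m″(c) = 0 if and only if (d/dc) I(φ(c)) = 0. -/

import Mathlib

/-- If additionally `c ↦ I(φ(c))` is differentiable at a speed `c` in the open
interval, then the moment of instability `m(c) = H(φ(c)) - c·I(φ(c))` is twice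
differentiable at `c` with `m''(c) = -(d/dc) I(φ(c))`; in particular
`m''(c) = 0 ↔ (d/dc) I(φ(c)) = 0`. -/
theorem moment_of_instability_second_deriv
    (E : Type*) [NormedAddCommGroup E] [NormedSpace ℝ E]
    (H I : E → ℝ) (hH : Differentiable ℝ H) (hI : Differentiable ℝ I)
    (a b : ℝ) (φ : ℝ → E)
    (hφ : DifferentiableOn ℝ φ (Set.Ioo a b))
    (hcrit : ∀ c ∈ Set.Ioo a b, fderiv ℝ H (φ c) = c • fderiv ℝ I (φ c))
    (m : ℝ → ℝ) (hm : ∀ c, m c = H (φ c) - c * I (φ c))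
    (c : ℝ) (hc : c ∈ Set.Ioo a b)
    (hIφ : DifferentiableAt ℝ (fun c => I (φ c)) c) :
    (DifferentiableAt ℝ (deriv m) c ∧
      deriv (deriv m) c = -(deriv (fun c => I (φ c)) c)) ∧
    (deriv (deriv m) c = 0 ↔ deriv (fun c => I (φ c)) c = 0) := by
  -- First: m'(x) = -(I (φ x)) for all x in the open interval.
  have hmem : ∀ x ∈ Set.Ioo a b, HasDerivAt m (-(I (φ x))) x := by
    intro x hx
    have hφx : DifferentiableAt ℝ φ x :=
      (hφ x hx).differentiableAt ((isOpen_Ioo).mem_nhds hx)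
    have hφd : HasDerivAt φ (deriv φ x) x := hφx.hasDerivAt
    have hHd : HasDerivAt (fun y => H (φ y)) (fderiv ℝ H (φ x) (deriv φ x)) x :=
      (hH (φ x)).hasFDerivAt.comp_hasDerivAt x hφd
    have hId : HasDerivAt (fun y => I (φ y)) (fderiv ℝ I (φ x) (deriv φ x)) x :=
      (hI (φ x)).hasFDerivAt.comp_hasDerivAt x hφd
    have hprod : HasDerivAt (fun y => y * I (φ y))
        (1 * I (φ x) + x * fderiv ℝ I (φ x) (deriv φ x)) x :=
      (hasDerivAt_id x).mul hId
    have hsub := hHd.sub hprod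
    have heq : (fun y => H (φ y) - y * I (φ y)) = m := by
      funext y; rw [hm y]
    rw [show ((fun y => H (φ y)) - fun y => y * I (φ y)) = m from heq] at hsub
    have hval : fderiv ℝ H (φ x) (deriv φ x)
        - (1 * I (φ x) + x * fderiv ℝ I (φ x) (deriv φ x)) = -(I (φ x)) := by
      rw [hcrit x hx]
      simp [ContinuousLinearMap.smul_apply]
    rwa [hval] at hsub
  have hev : deriv m =ᶠ[nhds c] fun x => -(I (φ x)) := by
    filter_upwards [(isOpen_Ioo).mem_nhds hc] with x hx
    exact (hmem x hx).deriv
  have hdiff : DifferentiableAt ℝ (deriv m) c :=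
    hIφ.neg.congr_of_eventuallyEq hev
  have hder : deriv (deriv m) c = -(deriv (fun c => I (φ c)) c) := by
    rw [hev.deriv_eq, deriv.fun_neg]
  exact ⟨⟨hdiff, hder⟩, by rw [hder]; simp⟩
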